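/- Let R be an infinite integral domain and n ≥ 2. If p(x₁,...,xₙ) = c₀ + Σ_{i=1}^n c_i x_i is an associative affine function with c₁ = cₙ = 1, then c_i = c₂^{i-1} for every i ∈ {1,...,n} and c₂^{n-1} = 1; moreover either c₀ = 0 or c₁ = c₂ = ⋯ = cₙ. -/
import Mathlib


/-- Substituting `f` applied to the window `x_i, ..., x_{i+n-1}` into slot `i`
of `f` applied to the remaining outer variables among `x_1, ..., x_{2n-1}`. -/
def nestAt {R : Type*} (n : ℕ) (f : (Fin n → R) → R) (i : Fin n)
    (x : Fin (2 * n - 1) → R) : R :=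
  f (fun j =>
    if (j : ℕ) < (i : ℕ) then x ⟨j, by have := j.isLt; have := i.isLt; omega⟩
    else if (j : ℕ) = (i : ℕ) then
      f (fun k => x ⟨(i : ℕ) + (k : ℕ), by have := k.isLt; have := i.isLt; omega⟩)
    else x ⟨(j : ℕ) + n - 1, by have := j.isLt; have := i.isLt; omega⟩)

/-- `f` is `n`-ary associative: all the bracketings coincide. -/
def IsNAssoc {R : Type*} (n : ℕ) (f : (Fin n → R) → R) : Prop :=
  ∀ i j : Fin n, ∀ x : Fin (2 * n - 1) → R, nestAt n f i x = nestAt n f j x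


lemma sum_pick {R : Type*} [CommRing R] {n : ℕ} (g : Fin n → R) (a : Fin n) :
    ∑ j : Fin n, (if (j : ℕ) = (a : ℕ) then g j else 0) = g a := by
  simp [Fin.val_eq_val, Finset.sum_ite_eq']

theorem stmt_10 {R : Type*} [CommRing R] [IsDomain R] [Infinite R]
    (n : ℕ) (hn : 2 ≤ n) (c₀ : R) (c : Fin n → R)
    (hassoc : IsNAssoc n (fun x : Fin n → R => c₀ + ∑ i, c i * x i))
    (h1 : c ⟨0, by omega⟩ = 1) (hnn : c ⟨n - 1, by omega⟩ = 1) :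
    (∀ i : Fin n, c i = c ⟨1, by omega⟩ ^ i.val) ∧
      c ⟨1, by omega⟩ ^ (n - 1) = 1 ∧
      (c₀ = 0 ∨ ∀ i j : Fin n, c i = c j) := by
  have hzero : ∀ i j : Fin n, c i * c₀ = c j * c₀ := by
    intro i j
    have h := hassoc i j (fun _ => 0)
    simp only [nestAt, mul_zero, Finset.sum_const_zero, add_zero] at h
    have tr : ∀ (a : Fin n) (j' : Fin n),
        (c j' * (if (j' : ℕ) < (a : ℕ) then (0:R) else if (j' : ℕ) = (a : ℕ) then c₀ else 0))
          = (if (j' : ℕ) = (a : ℕ) then c j' * c₀ else 0) := by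
      intro a j'
      split_ifs <;> first | ring1 | (exfalso; omega)
    rw [Finset.sum_congr rfl (fun j' _ => tr i j'),
        Finset.sum_congr rfl (fun j' _ => tr j j'),
        sum_pick (fun j' => c j' * c₀) i, sum_pick (fun j' => c j' * c₀) j] at h
    exact add_left_cancel h
  have hstep : ∀ k : ℕ, ∀ hk : k + 1 < n,
      c ⟨k+1, hk⟩ = c ⟨k, by omega⟩ * c ⟨1, by omega⟩ := by
    intro k hk
    have h := hassoc ⟨0, by omega⟩ ⟨k, by omega⟩
      (fun t => if (t : ℕ) = k + 1 then 1 else 0)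
    simp only [nestAt, Fin.val_mk, mul_ite, mul_one, mul_zero] at h
    have inner1 : (∑ x : Fin n, if 0 + (x:ℕ) = k + 1 then c x else 0) = c ⟨k+1, hk⟩ := by
      have tr : ∀ x : Fin n, (if 0 + (x:ℕ) = k + 1 then c x else 0)
          = (if (x:ℕ) = ((⟨k+1, hk⟩ : Fin n) : ℕ) then c x else 0) := by
        intro x; simp only [Fin.val_mk]; split_ifs <;> first | rfl | (exfalso; omega)
      rw [Finset.sum_congr rfl (fun x _ => tr x), sum_pick c ⟨k+1, hk⟩]
    have inner2 : (∑ x : Fin n, if k + (x:ℕ) = k + 1 then c x else 0)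
        = c ⟨1, by omega⟩ := by
      have tr : ∀ x : Fin n, (if k + (x:ℕ) = k + 1 then c x else 0)
          = (if (x:ℕ) = ((⟨1, by omega⟩ : Fin n) : ℕ) then c x else 0) := by
        intro x; simp only [Fin.val_mk]; split_ifs <;> first | rfl | (exfalso; omega)
      rw [Finset.sum_congr rfl (fun x _ => tr x), sum_pick c ⟨1, by omega⟩]
    rw [inner1, inner2] at h
    have outL : ∀ x : Fin n,
        (if (x:ℕ) < 0 then (if (x:ℕ) = k + 1 then c x else 0)
         else if (x:ℕ) = 0 then c x * (c₀ + c ⟨k+1, hk⟩)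
         else if (x:ℕ) + n - 1 = k + 1 then c x else 0)
          = (if (x:ℕ) = ((⟨0, by omega⟩ : Fin n) : ℕ) then c x * (c₀ + c ⟨k+1, hk⟩) else 0) := by
      intro x; simp only [Fin.val_mk]; split_ifs <;> first | rfl | (exfalso; omega)
    have outR : ∀ x : Fin n,
        (if (x:ℕ) < k then (if (x:ℕ) = k + 1 then c x else 0)
         else if (x:ℕ) = k then c x * (c₀ + c ⟨1, by omega⟩)
         else if (x:ℕ) + n - 1 = k + 1 then c x else 0)
          = (if (x:ℕ) = ((⟨k, by omega⟩ : Fin n) : ℕ) then c x * (c₀ + c ⟨1, by omega⟩) else 0) := by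
      intro x; simp only [Fin.val_mk]; split_ifs <;> first | rfl | (exfalso; omega)
    rw [Finset.sum_congr rfl (fun x _ => outL x),
        Finset.sum_congr rfl (fun x _ => outR x),
        sum_pick (fun x => c x * (c₀ + c ⟨k+1, hk⟩)) ⟨0, by omega⟩,
        sum_pick (fun x => c x * (c₀ + c ⟨1, by omega⟩)) ⟨k, by omega⟩] at h
    have e0 := hzero ⟨0, by omega⟩ ⟨k, by omega⟩
    rw [h1] at h e0
    linear_combination h - e0
  have hpow : ∀ m : ℕ, ∀ hm : m < n, c ⟨m, hm⟩ = c ⟨1, by omega⟩ ^ m := by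
    intro m
    induction m with
    | zero => intro hm; simpa using h1
    | succ p ih => intro hm; rw [hstep p hm, ih (by omega), pow_succ]
  refine ⟨fun i => ?_, ?_, ?_⟩
  · have := hpow i.val i.isLt
    simpa using this
  · rw [← hpow (n-1) (by omega)]; exact hnn
  · by_cases hc0 : c₀ = 0
    · exact Or.inl hc0
    · exact Or.inr fun i j => mul_right_cancel₀ hc0 (hzero i j)
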